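/- arXiv:1003.1940 — 3 statements merged into one kernel-verified Lean document; each statement's English description precedes it below -/
import Mathlib

section
/- Let k be odd and let z be any (k+1)-mer over the DNA alphabet. Then the canonical bi-directed edge produced by the STEP-1 rule from rc(z) is equal, as a bi-directed edge, to the one produced from z: CE(rc(z)) is either CE(z) itself or its bi-directed reversal rev(CE(z)), where rev((u, v, o₁, o₂)) = (v, u, ¬o₂, ¬o₁) and ¬ swaps ▷ and ◁. -/
/-- The DNA alphabet Σ = {A, C, G, T}. -/
inductive Base : Type
  | A | C | G | T
  deriving DecidableEq

/-- The complement map: c(A)=T, c(T)=A, c(C)=G, c(G)=C. -/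
def Base.comp : Base → Base
  | .A => .T
  | .T => .A
  | .C => .G
  | .G => .C

/-- Reverse complement: the reversal of the character-wise complement. -/
def rc (s : List Base) : List Base := (s.map Base.comp).reverse

def Base.toFin : Base → Fin 4
  | .A => 0
  | .C => 1
  | .G => 2
  | .T => 3

/-- The order A < C < G < T on the DNA alphabet. -/
instance : LinearOrder Base :=
  LinearOrder.lift' Base.toFin (fun a b h => by cases a <;> cases b <;> simp_all [Base.toFin])

/-- Canonical form: the lexicographically smaller of `s` and `rc s`. -/
def canon (s : List Base) : List Base := if s ≤ rc s then s else rc s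

/-- Orientations of the arrowheads of a bi-directed edge: `fwd` = ▷, `rev` = ◁. -/
inductive Orient : Type
  | fwd | rev
  deriving DecidableEq

/-- `¬` on orientations: swaps ▷ and ◁. -/
def Orient.neg : Orient → Orient
  | .fwd => .rev
  | .rev => .fwd

/-- A bi-directed edge `(v₁, v₂, o₁, o₂)`. -/
abbrev BEdge : Type := List Base × List Base × Orient × Orient

/-- The STEP-1 rule: the canonical bi-directed edge produced from a `(k+1)`-mer `z`,
with `x = z[1..k]` and `y = z[2..k+1]`. -/
def CE (k : ℕ) (z : List Base) : BEdge :=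
  let x := z.take k
  let y := z.drop 1
  if x = canon x then
    if y = canon y then
      if canon x ≤ canon y then (canon x, canon y, Orient.fwd, Orient.fwd)
      else (canon y, canon x, Orient.rev, Orient.rev)
    else
      if canon x ≤ canon y then (canon x, canon y, Orient.fwd, Orient.rev)
      else (canon y, canon x, Orient.fwd, Orient.rev)
  else
    if y = canon y then
      if canon x ≤ canon y then (canon x, canon y, Orient.rev, Orient.fwd)
      else (canon y, canon x, Orient.rev, Orient.fwd)
    else
      if canon x ≤ canon y then (canon x, canon y, Orient.rev, Orient.rev)
      else (canon y, canon x, Orient.fwd, Orient.fwd)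

/-- The bi-directed reversal of a bi-directed edge: `rev (u, v, o₁, o₂) = (v, u, ¬o₂, ¬o₁)`. -/
def revEdge (e : BEdge) : BEdge := (e.2.1, e.1, e.2.2.2.neg, e.2.2.1.neg)

lemma Base.comp_comp (b : Base) : b.comp.comp = b := by cases b <;> rfl

lemma Base.comp_ne (b : Base) : b.comp ≠ b := by cases b <;> simp [Base.comp]

lemma rc_rc (s : List Base) : rc (rc s) = s := by
  unfold rc
  rw [List.map_reverse, List.reverse_reverse, List.map_map]
  have : Base.comp ∘ Base.comp = id := by funext b; simp [Base.comp_comp]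
  rw [this, List.map_id]

lemma rc_length (s : List Base) : (rc s).length = s.length := by simp [rc]

lemma canon_rc (s : List Base) : canon (rc s) = canon s := by
  unfold canon
  rw [rc_rc]
  split_ifs with h1 h2 h2
  · exact le_antisymm h1 h2
  · rfl
  · rfl
  · exact (h1 (le_of_not_ge h2)).elim

lemma ne_rc_of_odd (s : List Base) (h : Odd s.length) : s ≠ rc s := by
  obtain ⟨m, hm⟩ := h
  intro he
  have hlt : m < s.length := by omega
  have hlt' : m < (rc s).length := by rw [rc_length]; exact hlt
  have h1 : (rc s)[m]'hlt' = (s[m]'hlt).comp := by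
    simp only [rc, List.getElem_reverse, List.getElem_map, List.length_map]
    congr 2
    omega
  have h2 : s[m]'hlt = (rc s)[m]'hlt' := by congr 1
  rw [h1] at h2
  exact Base.comp_ne _ h2.symm

lemma canon_eq_or (s : List Base) : canon s = s ∨ canon s = rc s := by
  unfold canon; split_ifs <;> simp

lemma flip_canon (s : List Base) (hne : s ≠ rc s) :
    (rc s = canon s) ↔ ¬ (s = canon s) := by
  rcases canon_eq_or s with h | h
  · rw [h]
    constructor
    · intro h1 _; exact hne h1.symm
    · intro h1; exact absurd rfl h1
  · rw [h]
    constructor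
    · intro _ h1; exact hne h1
    · intro _; rfl

/-- For odd `k` and any `(k+1)`-mer `z`, the STEP-1 canonical bi-directed
edge produced from `rc z` is, as a bi-directed edge, equal to the one produced from `z`:
it is either `CE k z` itself or its bi-directed reversal. -/
theorem CE_rc_eq_or_revEdge (k : ℕ) (hk : Odd k) (z : List Base) (hz : z.length = k + 1) :
    CE k (rc z) = CE k z ∨ CE k (rc z) = revEdge (CE k z) := by
  have hx : (z.take k).length = k := by simp [List.length_take, hz]
  have hy : (z.drop 1).length = k := by simp [List.length_drop, hz]
  have hxne : z.take k ≠ rc (z.take k) := ne_rc_of_odd _ (by rw [hx]; exact hk)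
  have hyne : z.drop 1 ≠ rc (z.drop 1) := ne_rc_of_odd _ (by rw [hy]; exact hk)
  have hlen : (z.map Base.comp).length = k + 1 := by simp [hz]
  have htake : (rc z).take k = rc (z.drop 1) := by
    unfold rc
    rw [List.map_drop, List.reverse_drop, hlen]
    norm_num
  have hdrop : (rc z).drop 1 = rc (z.take k) := by
    unfold rc
    rw [List.map_take, List.reverse_take, hlen]
    norm_num
  have hfx := flip_canon _ hxne
  have hfy := flip_canon _ hyne
  unfold CE
  simp only [htake, hdrop, canon_rc, hfx, hfy]
  by_cases hxc : z.take k = canon (z.take k) <;>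
    by_cases hyc : z.drop 1 = canon (z.drop 1) <;>
    split_ifs <;>
    first
      | (left; rfl)
      | (right; rfl)
      | tauto
      | (exfalso
         exact ‹¬ canon (List.take k z) ≤ canon (List.drop 1 z)›
           (le_of_not_ge ‹¬ canon (List.drop 1 z) ≤ canon (List.take k z)›))
end

section
/- Let BG = (V, E) be a bi-directed graph and let BG^t = (V^t, E^t) be the directed graph obtained by applying the ListRankingTransform. Two nodes u, v ∈ V are connected by a valid bi-directed walk in BG if and only if there exist orientations a, b ∈ {▷, ◁} such that there is a (nonempty) directed path in BG^t from u^a to v^b (i.e., u⁺ (respectively u⁻) is connected by a directed path to one of v⁺ or v⁻). -/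
/-- A valid bi-directed walk of length `m ≥ 1` from `u` to `v` in the bi-directed graph
with edge set `E`: a vertex sequence `vert 0 = u, …, vert m = v` together with
orientation pairs `(a l, b l)` for `1 ≤ l ≤ m` such that each step traverses a
bi-directed edge (in either direction) and the orientations of consecutive edges agree
at each intermediate vertex. -/
def IsBiWalk {V : Type*} (E : Set (V × V × Orient × Orient)) (m : ℕ)
    (vert : ℕ → V) (a b : ℕ → Orient) (u v : V) : Prop :=
  1 ≤ m ∧ vert 0 = u ∧ vert m = v ∧
  (∀ l, 1 ≤ l → l ≤ m →
    (vert (l - 1), vert l, a l, b l) ∈ E ∨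
    (vert l, vert (l - 1), (b l).neg, (a l).neg) ∈ E) ∧
  (∀ l, 1 ≤ l → l < m → b l = a (l + 1))

/-- There is a valid bi-directed walk from `u` to `v`. -/
def BiWalk {V : Type*} (E : Set (V × V × Orient × Orient)) (u v : V) : Prop :=
  ∃ m vert a b, IsBiWalk E m vert a b u v

/-- The arcs of the directed graph `BGᵗ` produced by the ListRankingTransform on vertex
set `V × Orient` (writing `v^o` for `(v, o)`): each bi-directed edge `(u, v, o₁, o₂) ∈ E`
yields the two directed arcs `u^{o₁} → v^{o₂}` and `v^{¬o₂} → u^{¬o₁}`. -/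
def TArc {V : Type*} (E : Set (V × V × Orient × Orient)) (p q : V × Orient) : Prop :=
  ∃ u v o₁ o₂, (u, v, o₁, o₂) ∈ E ∧
    ((p = (u, o₁) ∧ q = (v, o₂)) ∨ (p = (v, o₂.neg) ∧ q = (u, o₁.neg)))

@[simp] lemma Orient.neg_neg (o : Orient) : o.neg.neg = o := by cases o <;> rfl

lemma tArc_iff {V : Type*} (E : Set (V × V × Orient × Orient)) (x y : V) (c d : Orient) :
    TArc E (x, c) (y, d) ↔ (x, y, c, d) ∈ E ∨ (y, x, d.neg, c.neg) ∈ E := by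
  constructor
  · rintro ⟨u', v', o₁, o₂, hE, ⟨h1, h2⟩ | ⟨h1, h2⟩⟩
    · obtain ⟨rfl, rfl⟩ := Prod.mk.inj h1
      obtain ⟨rfl, rfl⟩ := Prod.mk.inj h2
      exact Or.inl hE
    · obtain ⟨rfl, rfl⟩ := Prod.mk.inj h1
      obtain ⟨rfl, rfl⟩ := Prod.mk.inj h2
      right; simpa using hE
  · rintro (h | h)
    · exact ⟨x, y, c, d, h, Or.inl ⟨rfl, rfl⟩⟩
    · exact ⟨y, x, d.neg, c.neg, h, Or.inr ⟨by simp, by simp⟩⟩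

/-- Walk with endpoints' orientations recorded. -/
def BW {V : Type*} (E : Set (V × V × Orient × Orient)) (p q : V × Orient) : Prop :=
  ∃ m vert a b, IsBiWalk E m vert a b p.1 q.1 ∧ a 1 = p.2 ∧ b m = q.2

lemma bw_of_tArc {V : Type*} {E : Set (V × V × Orient × Orient)} {p q : V × Orient}
    (h : TArc E p q) : BW E p q := by
  obtain ⟨x, c⟩ := p; obtain ⟨y, d⟩ := q
  refine ⟨1, fun l => if l = 0 then x else y, fun _ => c, fun _ => d, ?_, rfl, rfl⟩
  refine ⟨le_refl 1, by simp, by simp, ?_, by omega⟩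
  intro l h1 h2
  interval_cases l
  simpa [tArc_iff] using h

lemma bw_tail {V : Type*} {E : Set (V × V × Orient × Orient)} {p q r : V × Orient}
    (h : BW E p q) (harc : TArc E q r) : BW E p r := by
  obtain ⟨x, c⟩ := p; obtain ⟨y, d⟩ := q; obtain ⟨z, e⟩ := r
  obtain ⟨m, vert, a, b, ⟨hm, h0, hv, hstep, hcons⟩, ha1, hbm⟩ := h
  refine ⟨m + 1,
    (fun l => if l ≤ m then vert l else z),
    (fun l => if l ≤ m then a l else d),
    (fun l => if l ≤ m then b l else e), ⟨by omega, by simp [h0], by simp, ?_, ?_⟩,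
    by simp [hm, ha1], by simp⟩
  · intro l h1 h2
    rcases Nat.lt_or_ge l (m + 1) with hl | hl
    · have hl' : l ≤ m := by omega
      have hl'' : l - 1 ≤ m := by omega
      simpa [hl', hl''] using hstep l h1 hl'
    · have : l = m + 1 := by omega
      subst this
      have : ¬ (m + 1 ≤ m) := by omega
      simp only [this, if_false, Nat.add_sub_cancel, le_refl, if_true, hv]
      simpa [tArc_iff] using harc
  · intro l h1 h2
    rcases Nat.lt_or_ge l m with hl | hl
    · have : l + 1 ≤ m := by omega
      simp [hl.le, this, hcons l h1 hl]
    · have : l = m := by omega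
      subst this
      simp [hbm]

lemma transGen_to_bw {V : Type*} {E : Set (V × V × Orient × Orient)} {p q : V × Orient}
    (h : Relation.TransGen (TArc E) p q) : BW E p q := by
  induction h with
  | single h => exact bw_of_tArc h
  | tail _ harc ih => exact bw_tail ih harc

lemma walk_to_transGen {V : Type*} {E : Set (V × V × Orient × Orient)} :
    ∀ m (vert : ℕ → V) (a b : ℕ → Orient) (u v : V), IsBiWalk E m vert a b u v →
    Relation.TransGen (TArc E) (u, a 1) (v, b m) := by
  intro m
  induction m with
  | zero => intro _ _ _ _ _ h; exact absurd h.1 (by omega)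
  | succ n ih =>
    intro vert a b u v h
    obtain ⟨hm, h0, hv, hstep, hcons⟩ := h
    rcases Nat.eq_zero_or_pos n with hn | hn
    · subst hn
      apply Relation.TransGen.single
      have := hstep 1 le_rfl le_rfl
      rw [tArc_iff]
      simpa [h0, hv] using this
    · have hw : IsBiWalk E n vert a b u (vert n) :=
        ⟨hn, h0, rfl, fun l h1 h2 => hstep l h1 (by omega),
          fun l h1 h2 => hcons l h1 (by omega)⟩
      have ht := ih vert a b u (vert n) hw
      apply ht.tail
      rw [hcons n hn (by omega), tArc_iff]
      have := hstep (n + 1) (by omega) le_rfl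
      simpa [hv] using this

/-- Lemma 1: Two nodes `u, v` of a bi-directed graph are connected by a
valid bi-directed walk iff there are orientations `a, b` such that there is a
(nonempty) directed path in the ListRankingTransform from `u^a` to `v^b`. -/
theorem biWalk_iff_transGen_tArc {V : Type*} (E : Set (V × V × Orient × Orient))
    (u v : V) :
    BiWalk E u v ↔ ∃ a b : Orient, Relation.TransGen (TArc E) (u, a) (v, b) := by
  constructor
  · rintro ⟨m, vert, a, b, h⟩
    exact ⟨a 1, b m, walk_to_transGen m vert a b u v h⟩
  · rintro ⟨a, b, h⟩
    obtain ⟨m, vert, a', b', hw, _, _⟩ := transGen_to_bw h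
    exact ⟨m, vert, a', b', hw⟩
end

section
/- Let BG = (V, E) be a bi-directed graph and let BG^t be its ListRankingTransform. If there is a valid bi-directed walk in BG from u to v with first-edge orientation pair (a₁, b₁) and last-edge orientation pair (a_m, b_m), then there is a (nonempty) directed path in BG^t from u^{a₁} to v^{b_m}. -/
/-- A valid bi-directed walk from `u` to `v` with first-edge orientation
pair `(a 1, b 1)` and last-edge orientation pair `(a m, b m)` yields a (nonempty)
directed path in the ListRankingTransform from `u^{a 1}` to `v^{b m}`. -/
theorem transGen_tArc_of_isBiWalk {V : Type*} (E : Set (V × V × Orient × Orient))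
    (m : ℕ) (vert : ℕ → V) (a b : ℕ → Orient) (u v : V)
    (h : IsBiWalk E m vert a b u v) :
    Relation.TransGen (TArc E) (u, a 1) (v, b m) := by
  obtain ⟨hm, h0, hv, hedge, hcons⟩ := h
  have negneg : ∀ o : Orient, o.neg.neg = o := by intro o; cases o <;> rfl
  have step : ∀ l, 1 ≤ l → l ≤ m → TArc E (vert (l - 1), a l) (vert l, b l) := by
    intro l h1 h2
    rcases hedge l h1 h2 with he | he
    · exact ⟨_, _, _, _, he, Or.inl ⟨rfl, rfl⟩⟩
    · refine ⟨_, _, _, _, he, Or.inr ⟨?_, ?_⟩⟩ <;> simp [negneg]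
  have key : ∀ l, 1 ≤ l → l ≤ m →
      Relation.TransGen (TArc E) (vert 0, a 1) (vert l, b l) := by
    intro l
    induction l with
    | zero => omega
    | succ n ih =>
      intro _ h2
      rcases Nat.eq_or_lt_of_le (show 1 ≤ n + 1 by omega) with h1 | h1
      · have := step 1 le_rfl (by omega)
        simp only [Nat.sub_self] at this
        rw [← h1]
        exact Relation.TransGen.single (h1 ▸ this)
      · have hn : 1 ≤ n := by omega
        have := ih hn (by omega)
        have harc := step (n + 1) (by omega) h2
        rw [hcons n hn (by omega)] at this
        simpa using this.tail harc
  have := key m hm le_rfl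
  rwa [h0, hv] at this
end
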